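/- Let A be a von Neumann algebra on H, let N, M be closed subspaces with P_N, P_M ∈ A, and let D ∈ A. Then D is left invertible up to (I−P_N, I−P_M) in A (i.e., there is S ∈ A with S·P_M D P_N = P_N) if and only if P_M D restricted to N is bounded below on N. -/

import Mathlib

variable {H : Type*} [NormedAddCommGroup H] [InnerProductSpace ℂ H] [CompleteSpace H]

/-- `P` is the orthogonal projection of `H` onto the subspace `K`. -/
def IsOrthProjOnto (P : H →L[ℂ] H) (K : Submodule ℂ H) : Prop :=
  P * P = P ∧ star P = P ∧ LinearMap.range (P : H →ₗ[ℂ] H) = K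

local notation "⟪" x ", " y "⟫" => @inner ℂ _ _ x y

/-- A self-adjoint operator can be moved across the inner product. -/
lemma inner_symm_of_star_eq {P : H →L[ℂ] H} (hsa : star P = P) (u v : H) :
    ⟪P u, v⟫ = ⟪u, P v⟫ := by
  rw [ContinuousLinearMap.star_eq_adjoint] at hsa
  have h := ContinuousLinearMap.adjoint_inner_right P u v
  rw [hsa] at h
  exact h.symm

/-- An orthogonal projection fixes the elements of its range. -/
lemma IsOrthProjOnto.apply_of_mem {P : H →L[ℂ] H} {K : Submodule ℂ H}
    (h : IsOrthProjOnto P K) {x : H} (hx : x ∈ K) : P x = x := by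
  obtain ⟨hidem, _, hrange⟩ := h
  rw [← hrange] at hx
  obtain ⟨y, rfl⟩ := hx
  calc P (P y) = (P * P) y := rfl
    _ = P y := by rw [hidem]

lemma IsOrthProjOnto.mem_range {P : H →L[ℂ] H} {K : Submodule ℂ H}
    (h : IsOrthProjOnto P K) (x : H) : P x ∈ K := by
  rw [← h.2.2]; exact ⟨x, rfl⟩

lemma IsOrthProjOnto.inner_compl {P : H →L[ℂ] H} {K : Submodule ℂ H}
    (h : IsOrthProjOnto P K) (x : H) : ⟪P x, x - P x⟫ = 0 := by
  obtain ⟨hidem, hsa, _⟩ := h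
  have hPP : P (P x) = P x := by
    calc P (P x) = (P * P) x := rfl
      _ = P x := by rw [hidem]
  rw [inner_sub_right, show ⟪P x, P x⟫ = ⟪x, P (P x)⟫ from inner_symm_of_star_eq hsa x (P x),
    hPP, inner_symm_of_star_eq hsa x x, sub_self]

/-- Pythagoras for an orthogonal projection. -/
lemma IsOrthProjOnto.norm_sq_eq {P : H →L[ℂ] H} {K : Submodule ℂ H}
    (h : IsOrthProjOnto P K) (x : H) : ‖x‖ ^ 2 = ‖P x‖ ^ 2 + ‖x - P x‖ ^ 2 := by
  have horth := h.inner_compl x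
  have hn := norm_add_sq (𝕜 := ℂ) (P x) (x - P x)
  simp only [horth, map_zero, mul_zero, add_zero] at hn
  have hx : P x + (x - P x) = x := by abel
  rw [hx] at hn
  simpa using hn

/-- In a von Neumann algebra, a two-sided inverse of an element of the algebra
belongs to the algebra. -/
lemma VonNeumannAlgebra.inv_mem (A : VonNeumannAlgebra H) {x y : H →L[ℂ] H}
    (hx : x ∈ A) (hxy : x * y = 1) (hyx : y * x = 1) : y ∈ A := by
  have : y ∈ Set.centralizer (Set.centralizer (A : Set (H →L[ℂ] H))) := by
    intro z hz
    have hzx : z * x = x * z := (hz x hx).symm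
    calc z * y = 1 * (z * y) := by rw [one_mul]
      _ = y * (x * z) * y := by rw [← hyx]; noncomm_ring
      _ = y * (z * x) * y := by rw [hzx]
      _ = y * z * (x * y) := by noncomm_ring
      _ = y * z := by rw [hxy, mul_one]
  rwa [A.centralizer_centralizer] at this

/-- A self-adjoint operator bounded below is invertible. -/
lemma exists_inverse_of_bounded_below {R : H →L[ℂ] H} (hsa : star R = R) {c : ℝ} (hc : 0 < c)
    (hbb : ∀ x, c * ‖x‖ ≤ ‖R x‖) :
    ∃ Q : H →L[ℂ] H, R * Q = 1 ∧ Q * R = 1 := by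
  have hanti : AntilipschitzWith (⟨c, hc.le⟩ : NNReal)⁻¹ R := by
    refine ContinuousLinearMap.antilipschitz_of_bound R ?_
    intro x
    show ‖x‖ ≤ c⁻¹ * ‖R x‖
    rw [inv_mul_eq_div, le_div_iff₀ hc, mul_comm]
    exact hbb x
  have hker : LinearMap.ker (R : H →ₗ[ℂ] H) = ⊥ := by
    rw [LinearMap.ker_eq_bot]
    exact hanti.injective
  have hclosed : (LinearMap.range (R : H →ₗ[ℂ] H)).topologicalClosure = LinearMap.range (R : H →ₗ[ℂ] H) :=
    ContinuousLinearMap.closed_range_of_antilipschitz hanti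
  have hdense : (LinearMap.range (R : H →ₗ[ℂ] H))ᗮ = ⊥ := by
    rw [Submodule.eq_bot_iff]
    intro x hx
    have hx0 : R x = 0 := by
      have h1 : ⟪R (R x), x⟫ = 0 := hx _ ⟨R x, rfl⟩
      have h2 : ⟪R x, R x⟫ = ⟪x, R (R x)⟫ := inner_symm_of_star_eq hsa x (R x)
      have h3 : ⟪x, R (R x)⟫ = 0 := by rw [← inner_conj_symm, h1, map_zero]
      rw [h3] at h2
      exact inner_self_eq_zero.mp h2
    have hx' := hbb x
    rw [hx0, norm_zero] at hx'
    have : ‖x‖ = 0 := le_antisymm (by nlinarith) (norm_nonneg x)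
    exact norm_eq_zero.mp this
  have hrange : LinearMap.range (R : H →ₗ[ℂ] H) = ⊤ := by
    have hcl : IsClosed (LinearMap.range (R : H →ₗ[ℂ] H) : Set H) := by
      rw [← hclosed]
      exact (LinearMap.range (R : H →ₗ[ℂ] H)).isClosed_topologicalClosure
    haveI : CompleteSpace (LinearMap.range (R : H →ₗ[ℂ] H)) := hcl.completeSpace_coe
    haveI : Submodule.HasOrthogonalProjection (LinearMap.range (R : H →ₗ[ℂ] H)) :=
      Submodule.HasOrthogonalProjection.ofCompleteSpace _
    rwa [Submodule.orthogonal_eq_bot_iff] at hdense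
  set e := ContinuousLinearEquiv.ofBijective R hker hrange with he
  have hcoe : ∀ x, e x = R x := fun x => rfl
  refine ⟨(e.symm : H →L[ℂ] H), ?_, ?_⟩
  · ext x
    simp only [ContinuousLinearMap.mul_apply, ContinuousLinearMap.one_apply,
      ContinuousLinearEquiv.coe_coe]
    rw [← hcoe, e.apply_symm_apply]
  · ext x
    simp only [ContinuousLinearMap.mul_apply, ContinuousLinearMap.one_apply,
      ContinuousLinearEquiv.coe_coe]
    rw [← hcoe, e.symm_apply_apply]

/-- `D` is left invertible up to `(I - P_N, I - P_M)` in `A` iff the compression `P_M D`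
is bounded below on `N`. -/
theorem left_invUpTo_iff_bounded_below (A : VonNeumannAlgebra H)
    (N M : Submodule ℂ H) (PN PM : H →L[ℂ] H)
    (hPN : IsOrthProjOnto PN N) (hPNA : PN ∈ A)
    (hPM : IsOrthProjOnto PM M) (hPMA : PM ∈ A)
    (D : H →L[ℂ] H) (hD : D ∈ A) :
    (∃ S ∈ A, S = PN * S * PM ∧ S * (PM * D * PN) = PN) ↔
      ∃ c : ℝ, 0 < c ∧ ∀ x ∈ N, c * ‖x‖ ≤ ‖(PM * D) x‖ := by
  constructor
  · rintro ⟨S, hSA, hS1, hS2⟩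
    refine ⟨(‖S‖ + 1)⁻¹, by positivity, fun x hx => ?_⟩
    have hPNx : PN x = x := hPN.apply_of_mem hx
    have hxS : S ((PM * D) x) = x := by
      have : (S * (PM * D * PN)) x = PN x := by rw [hS2]
      simpa [ContinuousLinearMap.mul_apply, hPNx] using this
    have h1 : ‖x‖ ≤ ‖S‖ * ‖(PM * D) x‖ := by
      calc ‖x‖ = ‖S ((PM * D) x)‖ := by rw [hxS]
        _ ≤ ‖S‖ * ‖(PM * D) x‖ := S.le_opNorm _
    have hnn : (0:ℝ) ≤ ‖(PM * D) x‖ := norm_nonneg _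
    have hS0 : (0:ℝ) ≤ ‖S‖ := norm_nonneg _
    rw [inv_mul_le_iff₀ (by positivity)]
    nlinarith
  · rintro ⟨c, hc, hbb⟩
    set T : H →L[ℂ] H := PM * D * PN with hT
    have hTA : T ∈ A := mul_mem (mul_mem hPMA hD) hPNA
    set R : H →L[ℂ] H := star T * T with hR
    have hRA : R ∈ A := mul_mem (star_mem hTA) hTA
    set R' : H →L[ℂ] H := R + 1 - PN with hR'
    have hR'A : R' ∈ A := sub_mem (add_mem hRA (one_mem A)) hPNA
    have hTPN : T * PN = T := by
      rw [hT, mul_assoc (PM * D), hPN.1]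
    have hPNstarT : PN * star T = star T := by
      have : star (T * PN) = star T := by rw [hTPN]
      rwa [star_mul, hPN.2.1] at this
    have hPNR : PN * R = R := by rw [hR, ← mul_assoc, hPNstarT]
    have hRPN : R * PN = R := by rw [hR, mul_assoc, hTPN]
    have hPNR' : PN * R' = R := by
      rw [hR', mul_sub, mul_add, hPNR, mul_one, hPN.1, add_sub_cancel_right]
    have hR'PN : R' * PN = R := by
      rw [hR', sub_mul, add_mul, hRPN, one_mul, hPN.1, add_sub_cancel_right]
    have hR'sa : star R' = R' := by
      rw [hR', star_sub, star_add, star_one, hPN.2.1, star_mul, star_star, ← hR]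
    set ε : ℝ := min (c ^ 2) 1 with hε
    have hε0 : 0 < ε := lt_min (by positivity) one_pos
    have hbbR' : ∀ x, ε * ‖x‖ ≤ ‖R' x‖ := by
      intro x
      have key : ε * ‖x‖ ^ 2 ≤ RCLike.re ⟪R' x, x⟫ := by
        have hRval : ⟪R x, x⟫ = (‖T x‖ : ℂ) ^ 2 := by
          rw [hR, ContinuousLinearMap.mul_apply, ContinuousLinearMap.star_eq_adjoint,
            ContinuousLinearMap.adjoint_inner_left, inner_self_eq_norm_sq_to_K]
          norm_cast
        have hPNval : ⟪((1 : H →L[ℂ] H) - PN) x, x⟫ = (‖x - PN x‖ : ℂ) ^ 2 := by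
          have h2 : ⟪x - PN x, x⟫ = ⟪x - PN x, x - PN x⟫ + ⟪x - PN x, PN x⟫ := by
            rw [← inner_add_right]; congr 1; abel
          have h3 : ⟪x - PN x, PN x⟫ = 0 := by
            rw [← inner_conj_symm]
            have := hPN.inner_compl x
            rw [this, map_zero]
          rw [ContinuousLinearMap.sub_apply, ContinuousLinearMap.one_apply, h2, h3, add_zero,
            inner_self_eq_norm_sq_to_K]
          norm_cast
        have hsplit : ⟪R' x, x⟫ = ⟪R x, x⟫ + ⟪((1 : H →L[ℂ] H) - PN) x, x⟫ := by
          have : R' x = R x + ((1 : H →L[ℂ] H) - PN) x := by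
            rw [hR']
            simp only [ContinuousLinearMap.add_apply, ContinuousLinearMap.sub_apply,
              ContinuousLinearMap.one_apply]
            abel
          rw [this, inner_add_left]
        have hre : RCLike.re ⟪R' x, x⟫ = ‖T x‖ ^ 2 + ‖x - PN x‖ ^ 2 := by
          rw [hsplit, hRval, hPNval]
          simp [← Complex.ofReal_pow]
        rw [hre]
        have hTlow : c * ‖PN x‖ ≤ ‖T x‖ := by
          have hmem : PN x ∈ N := hPN.mem_range x
          have h := hbb (PN x) hmem
          have hTx : T x = (PM * D) (PN x) := by rw [hT]; rfl
          rw [hTx]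
          exact h
        have hpyth := hPN.norm_sq_eq x
        have hT0 : (0:ℝ) ≤ ‖T x‖ := norm_nonneg _
        have hPN0 : (0:ℝ) ≤ ‖PN x‖ := norm_nonneg _
        have hTsq : (c * ‖PN x‖) ^ 2 ≤ ‖T x‖ ^ 2 := by
          exact pow_le_pow_left₀ (by positivity) hTlow 2
        have e1 : ε * ‖PN x‖ ^ 2 ≤ ‖T x‖ ^ 2 := by
          have h1 : ε ≤ c ^ 2 := min_le_left _ _
          nlinarith [sq_nonneg (‖PN x‖)]
        have e2 : ε * ‖x - PN x‖ ^ 2 ≤ ‖x - PN x‖ ^ 2 := by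
          have h2 : ε ≤ 1 := min_le_right _ _
          nlinarith [sq_nonneg (‖x - PN x‖)]
        have hsum : ε * ‖x‖ ^ 2 = ε * ‖PN x‖ ^ 2 + ε * ‖x - PN x‖ ^ 2 := by
          rw [hpyth]; ring
        linarith
      have hCS : RCLike.re ⟪R' x, x⟫ ≤ ‖R' x‖ * ‖x‖ := by
        calc RCLike.re ⟪R' x, x⟫ ≤ ‖⟪R' x, x⟫‖ := RCLike.re_le_norm _
          _ ≤ ‖R' x‖ * ‖x‖ := norm_inner_le_norm _ _
      rcases eq_or_ne x 0 with rfl | hx0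
      · simp
      · have hxpos : 0 < ‖x‖ := norm_pos_iff.mpr hx0
        have : ε * ‖x‖ ^ 2 ≤ ‖R' x‖ * ‖x‖ := le_trans key hCS
        nlinarith
    obtain ⟨Q, hQ1, hQ2⟩ := exists_inverse_of_bounded_below hR'sa hε0 hbbR'
    have hQA : Q ∈ A := A.inv_mem hR'A hQ1 hQ2
    set S : H →L[ℂ] H := PN * Q * star T with hS
    have hSA : S ∈ A := mul_mem (mul_mem hPNA hQA) (star_mem hTA)
    refine ⟨S, hSA, ?_, ?_⟩
    · rw [hS]
      have hstarTPM : star T * PM = star T := by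
        have h1 : PM * T = T := by rw [hT, ← mul_assoc, ← mul_assoc, hPM.1]
        have h2 : star (PM * T) = star T := by rw [h1]
        rwa [star_mul, hPM.2.1] at h2
      have hexp : PN * (PN * Q * star T) * PM = PN * PN * Q * (star T * PM) := by
        noncomm_ring
      rw [hexp, hstarTPM, hPN.1]
    · have key : S * T = PN * Q * R := by rw [hS, mul_assoc, ← hR]
      have hQR : PN * Q * R = PN := by
        rw [← hR'PN, ← mul_assoc, mul_assoc PN Q R', hQ2, mul_one, hPN.1]
      rw [key, hQR]
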